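/- The function F : ℝ → ℝ defined piecewise by F(x) = ‽(-1/x) for x ≤ -2; 1/4 - ‽(-x-1)/2 for -2 ≤ x ≤ -1; 1/4 + ‽(-1 - 1/x)/2 + ‽(x+1)/2 for -1 ≤ x ≤ -1/2; 1/2 - ‽(-x)/2 for -1/2 ≤ x ≤ 0; 1/2 + ‽(x) for 0 ≤ x ≤ 1; 7/8 + ‽(x-1)/4 for 1 ≤ x ≤ 2; 1 - ‽(1/x)/2 for x ≥ 2, is well defined (the pieces agree at the boundary points -2, -1, -1/2, 0, 1, 2), continuous, strictly increasing, and satisfies lim_{x→-∞} F(x) = 0 and lim_{x→∞} F(x) = 1. -/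

import Mathlib

open Filter

set_option maxHeartbeats 1000000 in
theorem cdf_wellDefined_continuous_strictMono (I : ℝ → ℝ)
    (hI0 : I 0 = 0)
    (hIcont : ContinuousOn I (Set.Icc 0 1))
    (hImono : StrictMonoOn I (Set.Icc 0 1))
    (hIlow : ∀ x : ℝ, 0 < x → x ≤ 1/2 →
      I x = (4 : ℝ) ^ (-⌊1/x⌋) * (1 - 2 * I (Int.fract (1/x))))
    (hIhigh : ∀ x : ℝ, 1/2 < x → x ≤ 1 →
      I x = 3/8 - 3/4 * I (1/x - 1) - 1/2 * I (1 - x))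
    (F : ℝ → ℝ)
    (hF : ∀ x : ℝ, F x =
      if x ≤ -2 then I (-1/x)
      else if x ≤ -1 then 1/4 - I (-x - 1)/2
      else if x ≤ -1/2 then 1/4 + I (-1 - 1/x)/2 + I (x + 1)/2
      else if x ≤ 0 then 1/2 - I (-x)/2
      else if x ≤ 1 then 1/2 + I x
      else if x ≤ 2 then 7/8 + I (x - 1)/4
      else 1 - I (1/x)/2) :
    -- the pieces agree at the boundary points -2, -1, -1/2, 0, 1, 2
    (I (1/2) = 1/4 - I 1 / 2) ∧
    (1/4 - I 0 / 2 = 1/4 + I 0 / 2 + I 0 / 2) ∧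
    (1/4 + I 1 / 2 + I (1/2) / 2 = 1/2 - I (1/2) / 2) ∧
    (1/2 - I 0 / 2 = 1/2 + I 0) ∧
    (1/2 + I 1 = 7/8 + I 0 / 4) ∧
    (7/8 + I 1 / 4 = 1 - I (1/2) / 2) ∧
    Continuous F ∧ StrictMono F ∧
    Tendsto F atBot (nhds 0) ∧ Tendsto F atTop (nhds 1) := by
  -- key values
  have hI1 : I 1 = 3/8 := by
    have := hIhigh 1 (by norm_num) le_rfl
    norm_num [hI0] at this; linarith
  have hI12 : I (1/2) = 1/16 := by
    have := hIlow (1/2) (by norm_num) (by norm_num)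
    norm_num [Int.fract, hI0] at this; linarith
  -- reciprocal on negatives is decreasing
  have recip : ∀ x y : ℝ, x < y → y < 0 → 1/y < 1/x := by
    intro x y hxy hy
    have h1 : (0:ℝ) < -y := by linarith
    have h2 : -y < -x := by linarith
    have h3 := one_div_lt_one_div_of_lt h1 h2
    have hx0 : x ≠ 0 := by intro h; rw [h] at hxy; linarith
    have hy0 : y ≠ 0 := by linarith
    have ex : 1/(-x) = -(1/x) := by field_simp
    have ey : 1/(-y) = -(1/y) := by field_simp
    linarith
  -- memberships
  have mem1 : ∀ x : ℝ, x ≤ -2 → -1/x ∈ Set.Icc (0:ℝ) 1 := by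
    intro x hx
    have hx0 : x < 0 := by linarith
    have key : x * (-1/x) = -1 := by
      field_simp
      rw [div_self hx0.ne]
    constructor
    · nlinarith
    · nlinarith
  have mem3 : ∀ x : ℝ, -1 ≤ x → x ≤ -1/2 → (-1 - 1/x) ∈ Set.Icc (0:ℝ) 1 := by
    intro x hx1 hx2
    have hx0 : x < 0 := by linarith
    have key : x * (1/x) = 1 := by
      field_simp
      exact div_self hx0.ne
    constructor
    · nlinarith
    · nlinarith
  have mem7 : ∀ x : ℝ, 2 ≤ x → 1/x ∈ Set.Icc (0:ℝ) 1 := by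
    intro x hx
    have hx0 : (0:ℝ) < x := by linarith
    constructor
    · positivity
    · rw [div_le_one hx0]; linarith
  -- piecewise formulas on closed intervals
  have E1 : ∀ x : ℝ, x ≤ -2 → F x = I (-1/x) := by
    intro x hx; rw [hF, if_pos hx]
  have E2 : ∀ x : ℝ, -2 ≤ x → x ≤ -1 → F x = 1/4 - I (-x - 1)/2 := by
    intro x hx1 hx2; rw [hF]
    rcases eq_or_lt_of_le hx1 with h | h
    · rw [← h]; norm_num [hI12, hI1]
    · rw [if_neg (not_le.mpr h), if_pos hx2]
  have E3 : ∀ x : ℝ, -1 ≤ x → x ≤ -1/2 → F x = 1/4 + I (-1 - 1/x)/2 + I (x + 1)/2 := by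
    intro x hx1 hx2; rw [hF]
    rcases eq_or_lt_of_le hx1 with h | h
    · rw [← h]; norm_num [hI0]
    · rw [if_neg (by push_neg; linarith), if_neg (not_le.mpr h), if_pos hx2]
  have E4 : ∀ x : ℝ, -1/2 ≤ x → x ≤ 0 → F x = 1/2 - I (-x)/2 := by
    intro x hx1 hx2; rw [hF]
    rcases eq_or_lt_of_le hx1 with h | h
    · rw [← h]; norm_num [hI12, hI1]
    · rw [if_neg (by push_neg; linarith), if_neg (by push_neg; linarith),
        if_neg (not_le.mpr h), if_pos hx2]
  have E5 : ∀ x : ℝ, 0 ≤ x → x ≤ 1 → F x = 1/2 + I x := by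
    intro x hx1 hx2; rw [hF]
    rcases eq_or_lt_of_le hx1 with h | h
    · rw [← h]; norm_num [hI0]
    · rw [if_neg (by push_neg; linarith), if_neg (by push_neg; linarith),
        if_neg (by push_neg; linarith), if_neg (not_le.mpr h), if_pos hx2]
  have E6 : ∀ x : ℝ, 1 ≤ x → x ≤ 2 → F x = 7/8 + I (x - 1)/4 := by
    intro x hx1 hx2; rw [hF]
    rcases eq_or_lt_of_le hx1 with h | h
    · rw [← h]; norm_num [hI0, hI1]
    · rw [if_neg (by push_neg; linarith), if_neg (by push_neg; linarith),
        if_neg (by push_neg; linarith), if_neg (by push_neg; linarith),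
        if_neg (not_le.mpr h), if_pos hx2]
  have E7 : ∀ x : ℝ, 2 ≤ x → F x = 1 - I (1/x)/2 := by
    intro x hx1; rw [hF]
    rcases eq_or_lt_of_le hx1 with h | h
    · rw [← h]; norm_num [hI12, hI1]
    · rw [if_neg (by push_neg; linarith), if_neg (by push_neg; linarith),
        if_neg (by push_neg; linarith), if_neg (by push_neg; linarith),
        if_neg (by push_neg; linarith), if_neg (not_le.mpr h)]
  -- strict monotonicity on pieces
  have S1 : StrictMonoOn F (Set.Iic (-2:ℝ)) := by
    intro x hx y hy hxy
    simp only [Set.mem_Iic] at hx hy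
    rw [E1 x hx, E1 y hy]
    have h := recip x y hxy (by linarith)
    exact hImono (mem1 x hx) (mem1 y hy) (by linarith [neg_div x (1:ℝ), neg_div y (1:ℝ)])
  have S2 : StrictMonoOn F (Set.Icc (-2:ℝ) (-1)) := by
    intro x hx y hy hxy
    rw [E2 x hx.1 hx.2, E2 y hy.1 hy.2]
    have h := hImono (a := -y - 1) (b := -x - 1)
      ⟨by linarith [hy.1, hy.2], by linarith [hy.1]⟩
      ⟨by linarith [hx.2], by linarith [hx.1]⟩ (by linarith)
    linarith
  have S3 : StrictMonoOn F (Set.Icc (-1:ℝ) (-1/2)) := by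
    intro x hx y hy hxy
    rw [E3 x hx.1 hx.2, E3 y hy.1 hy.2]
    have hr := recip x y hxy (by linarith [hy.2])
    have ha := hImono (mem3 x hx.1 hx.2) (mem3 y hy.1 hy.2) (by linarith)
    have hb := hImono (a := x + 1) (b := y + 1)
      ⟨by linarith [hx.1], by linarith [hx.2]⟩
      ⟨by linarith [hy.1], by linarith [hy.2]⟩ (by linarith)
    linarith
  have S4 : StrictMonoOn F (Set.Icc (-1/2:ℝ) 0) := by
    intro x hx y hy hxy
    rw [E4 x hx.1 hx.2, E4 y hy.1 hy.2]
    have h := hImono (a := -y) (b := -x)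
      ⟨by linarith [hy.2], by linarith [hy.1]⟩
      ⟨by linarith [hx.2], by linarith [hx.1]⟩ (by linarith)
    linarith
  have S5 : StrictMonoOn F (Set.Icc (0:ℝ) 1) := by
    intro x hx y hy hxy
    rw [E5 x hx.1 hx.2, E5 y hy.1 hy.2]
    have h := hImono hx hy hxy
    linarith
  have S6 : StrictMonoOn F (Set.Icc (1:ℝ) 2) := by
    intro x hx y hy hxy
    rw [E6 x hx.1 hx.2, E6 y hy.1 hy.2]
    have h := hImono (a := x - 1) (b := y - 1)
      ⟨by linarith [hx.1], by linarith [hx.2]⟩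
      ⟨by linarith [hy.1], by linarith [hy.2]⟩ (by linarith)
    linarith
  have S7 : StrictMonoOn F (Set.Ici (2:ℝ)) := by
    intro x hx y hy hxy
    simp only [Set.mem_Ici] at hx hy
    rw [E7 x hx, E7 y hy]
    have h := hImono (mem7 y (by linarith)) (mem7 x hx)
      (one_div_lt_one_div_of_lt (by linarith) hxy)
    linarith
  have SM : StrictMono F := by
    have s12 : StrictMonoOn F (Set.Iic (-1:ℝ)) := by
      have h := S1.union S2 isGreatest_Iic (isLeast_Icc (by norm_num))
      rwa [Set.Iic_union_Icc_eq_Iic (by norm_num)] at h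
    have s13 : StrictMonoOn F (Set.Iic (-1/2:ℝ)) := by
      have h := s12.union S3 isGreatest_Iic (isLeast_Icc (by norm_num))
      rwa [Set.Iic_union_Icc_eq_Iic (by norm_num)] at h
    have s14 : StrictMonoOn F (Set.Iic (0:ℝ)) := by
      have h := s13.union S4 isGreatest_Iic (isLeast_Icc (by norm_num))
      rwa [Set.Iic_union_Icc_eq_Iic (by norm_num)] at h
    have s15 : StrictMonoOn F (Set.Iic (1:ℝ)) := by
      have h := s14.union S5 isGreatest_Iic (isLeast_Icc (by norm_num))
      rwa [Set.Iic_union_Icc_eq_Iic (by norm_num)] at h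
    have s16 : StrictMonoOn F (Set.Iic (2:ℝ)) := by
      have h := s15.union S6 isGreatest_Iic (isLeast_Icc (by norm_num))
      rwa [Set.Iic_union_Icc_eq_Iic (by norm_num)] at h
    exact s16.Iic_union_Ici S7
  -- continuity via clamped continuous pieces
  have hJc : Continuous (fun t : ℝ => I (max 0 (min 1 t))) :=
    hIcont.comp_continuous (continuous_const.max (continuous_const.min continuous_id))
      (fun t => ⟨le_max_left _ _, max_le (by norm_num) (min_le_left _ _)⟩)
  have hJeq : ∀ t : ℝ, t ∈ Set.Icc (0:ℝ) 1 → I (max 0 (min 1 t)) = I t := by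
    intro t ht
    rw [min_eq_right ht.2, max_eq_right ht.1]
  have CF : Continuous F := by
    have hFG : F = fun x =>
        if x ≤ -2 then I (max 0 (min 1 (-1/(min x (-2)))))
        else if x ≤ -1 then 1/4 - I (max 0 (min 1 (-x - 1)))/2
        else if x ≤ -1/2 then
          1/4 + I (max 0 (min 1 (-1 - 1/(min (max x (-1)) (-1/2)))))/2
            + I (max 0 (min 1 (x + 1)))/2
        else if x ≤ 0 then 1/2 - I (max 0 (min 1 (-x)))/2
        else if x ≤ 1 then 1/2 + I (max 0 (min 1 x))
        else if x ≤ 2 then 7/8 + I (max 0 (min 1 (x - 1)))/4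
        else 1 - I (max 0 (min 1 (1/(max x 2))))/2 := by
      funext x
      rw [hF]
      split_ifs with h1 h2 h3 h4 h5 h6
      · rw [min_eq_left h1, hJeq _ (mem1 x h1)]
      · rw [hJeq _ ⟨by linarith, by push_neg at h1; linarith⟩]
      · push_neg at h1 h2
        rw [max_eq_left h2.le, min_eq_left h3,
          hJeq _ (mem3 x h2.le h3), hJeq _ ⟨by linarith, by linarith⟩]
      · push_neg at h3
        rw [hJeq _ ⟨by linarith, by linarith⟩]
      · push_neg at h4
        rw [hJeq _ ⟨by linarith, by linarith⟩]
      · push_neg at h5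
        rw [hJeq _ ⟨by linarith, by linarith⟩]
      · push_neg at h6
        rw [max_eq_left h6.le, hJeq _ (mem7 x h6.le)]
    rw [hFG]
    have ne1 : ∀ x : ℝ, min x (-2) ≠ 0 := fun x =>
      ne_of_lt (lt_of_le_of_lt (min_le_right _ _) (by norm_num))
    have ne3 : ∀ x : ℝ, min (max x (-1)) (-1/2) ≠ 0 := fun x =>
      ne_of_lt (lt_of_le_of_lt (min_le_right _ _) (by norm_num))
    have ne7 : ∀ x : ℝ, max x (2:ℝ) ≠ 0 := fun x =>
      ne_of_gt (lt_of_lt_of_le (by norm_num) (le_max_right _ _))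
    have c1 : Continuous fun x : ℝ => I (max 0 (min 1 (-1/(min x (-2))))) :=
      hJc.comp (continuous_const.div (continuous_id.min continuous_const) ne1)
    have c2 : Continuous fun x : ℝ => 1/4 - I (max 0 (min 1 (-x - 1)))/2 :=
      continuous_const.sub ((hJc.comp (continuous_neg.sub continuous_const)).div_const 2)
    have c3 : Continuous fun x : ℝ =>
        1/4 + I (max 0 (min 1 (-1 - 1/(min (max x (-1)) (-1/2)))))/2
          + I (max 0 (min 1 (x + 1)))/2 := by
      apply Continuous.add
      · apply continuous_const.add
        apply Continuous.div_const
        exact hJc.comp (continuous_const.sub (continuous_const.div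
          ((continuous_id.max continuous_const).min continuous_const) ne3))
      · exact (hJc.comp (continuous_id.add continuous_const)).div_const 2
    have c4 : Continuous fun x : ℝ => 1/2 - I (max 0 (min 1 (-x)))/2 :=
      continuous_const.sub ((hJc.comp continuous_neg).div_const 2)
    have c5 : Continuous fun x : ℝ => 1/2 + I (max 0 (min 1 x)) :=
      continuous_const.add hJc
    have c6 : Continuous fun x : ℝ => 7/8 + I (max 0 (min 1 (x - 1)))/4 :=
      continuous_const.add ((hJc.comp (continuous_id.sub continuous_const)).div_const 4)
    have c7 : Continuous fun x : ℝ => 1 - I (max 0 (min 1 (1/(max x 2))))/2 :=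
      continuous_const.sub ((hJc.comp (continuous_const.div
        (continuous_id.max continuous_const) ne7)).div_const 2)
    have g67 : Continuous (fun x : ℝ => if x ≤ 2 then 7/8 + I (max 0 (min 1 (x - 1)))/4
        else 1 - I (max 0 (min 1 (1/(max x 2))))/2) := by
      apply Continuous.if_le c6 c7 continuous_id continuous_const
      intro x hx; simp only [id] at hx; subst hx; norm_num [hI12, hI1]
    have g57 : Continuous (fun x : ℝ => if x ≤ 1 then 1/2 + I (max 0 (min 1 x))
        else if x ≤ 2 then 7/8 + I (max 0 (min 1 (x - 1)))/4
        else 1 - I (max 0 (min 1 (1/(max x 2))))/2) := by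
      apply Continuous.if_le c5 g67 continuous_id continuous_const
      intro x hx; simp only [id] at hx; subst hx; norm_num [hI0, hI1]
    have g47 : Continuous (fun x : ℝ => if x ≤ 0 then 1/2 - I (max 0 (min 1 (-x)))/2
        else if x ≤ 1 then 1/2 + I (max 0 (min 1 x))
        else if x ≤ 2 then 7/8 + I (max 0 (min 1 (x - 1)))/4
        else 1 - I (max 0 (min 1 (1/(max x 2))))/2) := by
      apply Continuous.if_le c4 g57 continuous_id continuous_const
      intro x hx; simp only [id] at hx; subst hx; norm_num [hI0]
    have g37 : Continuous (fun x : ℝ => if x ≤ -1/2 then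
          1/4 + I (max 0 (min 1 (-1 - 1/(min (max x (-1)) (-1/2)))))/2
            + I (max 0 (min 1 (x + 1)))/2
        else if x ≤ 0 then 1/2 - I (max 0 (min 1 (-x)))/2
        else if x ≤ 1 then 1/2 + I (max 0 (min 1 x))
        else if x ≤ 2 then 7/8 + I (max 0 (min 1 (x - 1)))/4
        else 1 - I (max 0 (min 1 (1/(max x 2))))/2) := by
      apply Continuous.if_le c3 g47 continuous_id continuous_const
      intro x hx; simp only [id] at hx; subst hx; norm_num [hI12, hI1]
    have g27 : Continuous (fun x : ℝ => if x ≤ -1 then 1/4 - I (max 0 (min 1 (-x - 1)))/2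
        else if x ≤ -1/2 then
          1/4 + I (max 0 (min 1 (-1 - 1/(min (max x (-1)) (-1/2)))))/2
            + I (max 0 (min 1 (x + 1)))/2
        else if x ≤ 0 then 1/2 - I (max 0 (min 1 (-x)))/2
        else if x ≤ 1 then 1/2 + I (max 0 (min 1 x))
        else if x ≤ 2 then 7/8 + I (max 0 (min 1 (x - 1)))/4
        else 1 - I (max 0 (min 1 (1/(max x 2))))/2) := by
      apply Continuous.if_le c2 g37 continuous_id continuous_const
      intro x hx; simp only [id] at hx; subst hx; norm_num [hI0]
    apply Continuous.if_le c1 g27 continuous_id continuous_const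
    intro x hx; simp only [id] at hx; subst hx; norm_num [hI12, hI1]
  -- limits
  have LB : Tendsto F atBot (nhds 0) := by
    have h1 : Tendsto (fun x : ℝ => -1/x) atBot (nhds 0) := by
      have h := (tendsto_inv_atTop_zero (𝕜 := ℝ)).comp tendsto_neg_atBot_atTop
      exact h.congr fun x => by
        show (-x)⁻¹ = -1/x
        rw [inv_neg, neg_div, one_div]
    have h2 : Tendsto (fun x : ℝ => -1/x) atBot (nhdsWithin 0 (Set.Icc 0 1)) := by
      rw [tendsto_nhdsWithin_iff]
      exact ⟨h1, (eventually_le_atBot (-2:ℝ)).mono fun x hx => mem1 x hx⟩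
    have h3 : Tendsto (fun x : ℝ => I (-1/x)) atBot (nhds (I 0)) :=
      Filter.Tendsto.comp (hIcont 0 ⟨le_refl 0, by norm_num⟩) h2
    rw [hI0] at h3
    exact h3.congr' ((eventually_le_atBot (-2:ℝ)).mono fun x hx => (E1 x hx).symm)
  have LT : Tendsto F atTop (nhds 1) := by
    have h2 : Tendsto (fun x : ℝ => 1/x) atTop (nhdsWithin 0 (Set.Icc 0 1)) := by
      rw [tendsto_nhdsWithin_iff]
      refine ⟨?_, (eventually_ge_atTop (2:ℝ)).mono fun x hx => mem7 x hx⟩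
      simpa using tendsto_inv_atTop_zero (𝕜 := ℝ)
    have h3 : Tendsto (fun x : ℝ => I (1/x)) atTop (nhds (I 0)) :=
      Filter.Tendsto.comp (hIcont 0 ⟨le_refl 0, by norm_num⟩) h2
    rw [hI0] at h3
    have h4 : Tendsto (fun x : ℝ => 1 - I (1/x)/2) atTop (nhds 1) := by
      simpa using (tendsto_const_nhds (α := ℝ) (f := atTop) (x := (1:ℝ))).sub (h3.div_const 2)
    exact h4.congr' ((eventually_ge_atTop (2:ℝ)).mono fun x hx => (E7 x hx).symm)
  refine ⟨by rw [hI12, hI1]; norm_num, by rw [hI0]; ring,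
    by rw [hI12, hI1]; norm_num, by rw [hI0]; ring,
    by rw [hI0, hI1]; norm_num, by rw [hI12, hI1]; norm_num,
    CF, SM, LB, LT⟩
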